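/- arXiv:2203.01901 — 2 statements merged into one kernel-verified Lean document; each statement's English description precedes it below -/
import Mathlib

section
/- Let v ∈ ℤ³ be primitive with ‖v‖² divisible by d² for a positive integer d. Then the subgroup M(v,d) = {a ∈ v^⊥ : d divides a × v} has index d in the lattice v^⊥ = {x ∈ ℤ³ : x · v = 0}. -/
def dot3 (a b : Fin 3 → ℤ) : ℤ := a 0 * b 0 + a 1 * b 1 + a 2 * b 2

def cross3 (a b : Fin 3 → ℤ) : Fin 3 → ℤ :=
  ![a 1 * b 2 - a 2 * b 1, a 2 * b 0 - a 0 * b 2, a 0 * b 1 - a 1 * b 0]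

lemma cross3_add_left (a b v : Fin 3 → ℤ) :
    cross3 (a + b) v = cross3 a v + cross3 b v := by
  funext i; fin_cases i <;> simp [cross3] <;> ring

lemma cross3_zero_left (v : Fin 3 → ℤ) : cross3 0 v = 0 := by
  funext i; fin_cases i <;> simp [cross3]

lemma cross3_neg_left (a v : Fin 3 → ℤ) : cross3 (-a) v = -(cross3 a v) := by
  funext i; fin_cases i <;> simp [cross3] <;> ring

/-- The lattice `v^⊥` of integer vectors orthogonal to `v`. -/
def perpSub (v : Fin 3 → ℤ) : AddSubgroup (Fin 3 → ℤ) where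
  carrier := {a | dot3 a v = 0}
  zero_mem' := by simp [dot3]
  add_mem' := by
    intro a b ha hb
    simp only [Set.mem_setOf_eq, dot3, Pi.add_apply] at *
    linarith
  neg_mem' := by
    intro a ha
    simp only [Set.mem_setOf_eq, dot3, Pi.neg_apply] at *
    linarith

/-- The subgroup `M(v,d) = {a ∈ v^⊥ : d ∣ a × v}`. -/
def MSub (v : Fin 3 → ℤ) (d : ℤ) : AddSubgroup (Fin 3 → ℤ) where
  carrier := {a | dot3 a v = 0 ∧ ∀ i, d ∣ cross3 a v i}
  zero_mem' := ⟨by simp [dot3], by intro i; rw [cross3_zero_left]; simp⟩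
  add_mem' := by
    rintro a b ⟨ha, ha'⟩ ⟨hb, hb'⟩
    refine ⟨?_, ?_⟩
    · simp only [dot3, Pi.add_apply] at *; linarith
    · intro i; rw [cross3_add_left]; exact dvd_add (ha' i) (hb' i)
  neg_mem' := by
    rintro a ⟨ha, ha'⟩
    refine ⟨?_, ?_⟩
    · simp only [dot3, Pi.neg_apply] at *; linarith
    · intro i; rw [cross3_neg_left]; simpa using (ha' i).neg_right

/-- The subgroup `Γ(v,d) = {a : d ∣ a × v, d² ∣ (a × v) × v}`. -/
def GammaSub (v : Fin 3 → ℤ) (d : ℤ) : AddSubgroup (Fin 3 → ℤ) where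
  carrier := {a | (∀ i, d ∣ cross3 a v i) ∧ ∀ i, d^2 ∣ cross3 (cross3 a v) v i}
  zero_mem' := by
    constructor <;> intro i <;> rw [cross3_zero_left] <;> simp [cross3_zero_left]
  add_mem' := by
    rintro a b ⟨ha, ha'⟩ ⟨hb, hb'⟩
    refine ⟨fun i => ?_, fun i => ?_⟩
    · rw [cross3_add_left]; exact dvd_add (ha i) (hb i)
    · rw [cross3_add_left, cross3_add_left]; exact dvd_add (ha' i) (hb' i)
  neg_mem' := by
    rintro a ⟨ha, ha'⟩
    refine ⟨fun i => ?_, fun i => ?_⟩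
    · rw [cross3_neg_left]; simpa using (ha i).neg_right
    · rw [cross3_neg_left, cross3_neg_left]; simpa using (ha' i).neg_right

lemma triple1 (a v : Fin 3 → ℤ) (i : Fin 3) :
    cross3 (cross3 a v) v i = dot3 a v * v i - dot3 v v * a i := by
  fin_cases i <;> simp [cross3, dot3] <;> ring

lemma triple2 (u w v : Fin 3 → ℤ) (i : Fin 3) :
    cross3 u (cross3 w v) i = dot3 u v * w i - dot3 u w * v i := by
  fin_cases i <;> simp [cross3, dot3] <;> ring

lemma dot3_cross_self (u v : Fin 3 → ℤ) : dot3 (cross3 u v) v = 0 := by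
  simp [cross3, dot3]; ring

lemma exists_dual (v : Fin 3 → ℤ) (hv : Int.gcd (Int.gcd (v 0) (v 1)) (v 2) = 1) :
    ∃ u : Fin 3 → ℤ, dot3 u v = 1 := by
  obtain ⟨g, hg⟩ : ∃ g : ℤ, g = (Int.gcd (v 0) (v 1) : ℤ) := ⟨_, rfl⟩
  have h1 : g = v 0 * Int.gcdA (v 0) (v 1) + v 1 * Int.gcdB (v 0) (v 1) := by
    rw [hg]; exact Int.gcd_eq_gcd_ab _ _
  have h2 : (Int.gcd g (v 2) : ℤ) = g * Int.gcdA g (v 2) + v 2 * Int.gcdB g (v 2) :=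
    Int.gcd_eq_gcd_ab _ _
  have hv' : (Int.gcd g (v 2) : ℤ) = 1 := by
    rw [hg]; exact_mod_cast hv
  rw [hv'] at h2
  refine ⟨![Int.gcdA (v 0) (v 1) * Int.gcdA g (v 2),
            Int.gcdB (v 0) (v 1) * Int.gcdA g (v 2),
            Int.gcdB g (v 2)], ?_⟩
  simp only [dot3, Matrix.cons_val_zero, Matrix.cons_val_one, Matrix.head_cons,
    Matrix.cons_val_two, Matrix.tail_cons]
  linear_combination -h2 - Int.gcdA g (v 2) * h1

def Primitive (v : Fin 3 → ℤ) : Prop := Int.gcd (Int.gcd (v 0) (v 1)) (v 2) = 1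

/-- For primitive `v` with `d² ∣ ‖v‖²`, the subgroup `M(v,d)` has index `d` in `v^⊥`. -/
theorem M_relindex_perp (v : Fin 3 → ℤ) (hv : Primitive v) (d : ℕ) (hd : 0 < d)
    (hdvd : (d : ℤ)^2 ∣ dot3 v v) :
    (MSub v (d : ℤ)).relIndex (perpSub v) = d := by
  obtain ⟨u, hu⟩ := exists_dual v (by exact hv)
  have hdN : (d : ℤ) ∣ dot3 v v := dvd_trans (dvd_pow_self _ two_ne_zero) hdvd
  -- the hom on the ambient group
  let g : (Fin 3 → ℤ) →+ ZMod d :=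
  { toFun := fun a => ((dot3 u (cross3 a v) : ℤ) : ZMod d)
    map_zero' := by simp [dot3, cross3]
    map_add' := by
      intro a b
      have : dot3 u (cross3 (a + b) v) = dot3 u (cross3 a v) + dot3 u (cross3 b v) := by
        simp [dot3, cross3, Pi.add_apply]; ring
      show ((dot3 u (cross3 (a + b) v) : ℤ) : ZMod d) = _
      rw [this]; push_cast; ring }
  let f : (perpSub v) →+ ZMod d := g.comp (perpSub v).subtype
  -- divisibility of the double cross product
  have hdc : ∀ a : Fin 3 → ℤ, dot3 a v = 0 → ∀ i, (d : ℤ) ∣ cross3 (cross3 a v) v i := by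
    intro a ha i
    rw [triple1, ha]
    simpa using dvd_neg.mpr (hdN.mul_right (a i))
  -- kernel characterization
  have hker : ∀ a : Fin 3 → ℤ, dot3 a v = 0 →
      ((d : ℤ) ∣ dot3 u (cross3 a v) ↔ ∀ i, (d : ℤ) ∣ cross3 a v i) := by
    intro a ha
    constructor
    · intro h i
      have h2 := triple2 u (cross3 a v) v i
      rw [hu, one_mul] at h2
      have h3 : cross3 a v i = cross3 u (cross3 (cross3 a v) v) i
          + dot3 u (cross3 a v) * v i := by linarith
      rw [h3]
      refine dvd_add ?_ (h.mul_right _)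
      have hd0 := hdc a ha 0
      have hd1 := hdc a ha 1
      have hd2 := hdc a ha 2
      fin_cases i <;> simp only [cross3, Matrix.cons_val_zero, Matrix.cons_val_one,
        Matrix.head_cons, Matrix.cons_val_two, Matrix.tail_cons]
      · exact dvd_sub (hd2.mul_left _) (hd1.mul_left _)
      · exact dvd_sub (hd0.mul_left _) (hd2.mul_left _)
      · exact dvd_sub (hd1.mul_left _) (hd0.mul_left _)
    · intro h
      exact dvd_add (dvd_add ((h 0).mul_left _) ((h 1).mul_left _)) ((h 2).mul_left _)
  haveI : NeZero d := ⟨hd.ne'⟩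
  -- kernel equals MSub.addSubgroupOf perpSub
  have hkereq : ((MSub v (d : ℤ)).addSubgroupOf (perpSub v)) = f.ker := by
    ext ⟨a, ha⟩
    have ha' : dot3 a v = 0 := ha
    simp only [AddSubgroup.mem_addSubgroupOf, AddMonoidHom.mem_ker]
    show (a ∈ MSub v (d : ℤ)) ↔ ((dot3 u (cross3 a v) : ℤ) : ZMod d) = 0
    rw [ZMod.intCast_zmod_eq_zero_iff_dvd, hker a ha']
    exact ⟨fun h => h.2, fun h => ⟨ha', h⟩⟩
  -- f is surjective
  have ha0 : (cross3 u v) ∈ perpSub v := dot3_cross_self u v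
  have hone : f ⟨cross3 u v, ha0⟩ = 1 := by
    show ((dot3 u (cross3 (cross3 u v) v) : ℤ) : ZMod d) = 1
    have : dot3 u (cross3 (cross3 u v) v)
        = dot3 u v * dot3 u v - dot3 v v * dot3 u u := by
      have h0 := triple1 u v 0
      have h1 := triple1 u v 1
      have h2 := triple1 u v 2
      simp only [dot3] at *
      rw [h0, h1, h2]; ring
    rw [this, hu, one_mul]
    push_cast
    rw [(ZMod.intCast_zmod_eq_zero_iff_dvd _ _).mpr hdN]
    ring
  have hsurj : Function.Surjective f := by
    intro y
    refine ⟨(y.val : ℤ) • ⟨cross3 u v, ha0⟩, ?_⟩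
    rw [map_zsmul, hone]
    show (y.val : ℤ) • (1 : ZMod d) = y
    rw [zsmul_eq_mul, mul_one]
    push_cast
    simp [ZMod.natCast_val, ZMod.cast_id]
  rw [AddSubgroup.relIndex, hkereq, AddSubgroup.index_ker,
    AddMonoidHom.range_eq_top_of_surjective f hsurj]
  rw [Nat.card_congr AddSubgroup.topEquiv.toEquiv, Nat.card_zmod]
end

section
/- Let v ∈ ℤ³ be primitive with d² ∣ ‖v‖². Then for any a, b in Γ(v,d) = {x ∈ ℤ³ : d ∣ x × v and d² ∣ (x × v) × v}, the dot product a · b is divisible by d². -/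
lemma cross3_smul_left (d : ℤ) (a v : Fin 3 → ℤ) :
    cross3 (fun i => d * a i) v = fun i => d * cross3 a v i := by
  funext i; fin_cases i <;> simp [cross3] <;> ring

lemma decomp (v c : Fin 3 → ℤ) (hc : c 0 * v 0 + c 1 * v 1 + c 2 * v 2 = 1)
    (d : ℤ) (hd : d ≠ 0) (hN : d ^ 2 ∣ dot3 v v) (a : Fin 3 → ℤ)
    (ha : a ∈ GammaSub v d) :
    ∃ t a', (∀ i, a i - t * v i = d * a' i) ∧ d ∣ dot3 v a' := by
  obtain ⟨ha1, ha2⟩ := ha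
  set t : ℤ := c 0 * a 0 + c 1 * a 1 + c 2 * a 2 with ht
  have hdiv0 : d ∣ a 0 - t * v 0 := by
    have h : a 0 - t * v 0 = c 1 * cross3 a v 2 - c 2 * cross3 a v 1 := by
      simp only [cross3, ht, Matrix.cons_val_zero, Matrix.cons_val_one, Matrix.head_cons,
        Matrix.cons_val_two, Matrix.tail_cons]
      linear_combination (-(a 0)) * hc
    rw [h]; exact dvd_sub ((ha1 2).mul_left _) ((ha1 1).mul_left _)
  have hdiv1 : d ∣ a 1 - t * v 1 := by
    have h : a 1 - t * v 1 = c 2 * cross3 a v 0 - c 0 * cross3 a v 2 := by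
      simp only [cross3, ht, Matrix.cons_val_zero, Matrix.cons_val_one, Matrix.head_cons,
        Matrix.cons_val_two, Matrix.tail_cons]
      linear_combination (-(a 1)) * hc
    rw [h]; exact dvd_sub ((ha1 0).mul_left _) ((ha1 2).mul_left _)
  have hdiv2 : d ∣ a 2 - t * v 2 := by
    have h : a 2 - t * v 2 = c 0 * cross3 a v 1 - c 1 * cross3 a v 0 := by
      simp only [cross3, ht, Matrix.cons_val_zero, Matrix.cons_val_one, Matrix.head_cons,
        Matrix.cons_val_two, Matrix.tail_cons]
      linear_combination (-(a 2)) * hc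
    rw [h]; exact dvd_sub ((ha1 1).mul_left _) ((ha1 0).mul_left _)
  have hdiv : ∀ i, d ∣ a i - t * v i := by
    intro i; fin_cases i
    · exact hdiv0
    · exact hdiv1
    · exact hdiv2
  choose a' ha' using fun i => (hdiv i)
  refine ⟨t, a', ha', ?_⟩
  have hcav : cross3 a v = fun i => d * cross3 a' v i := by
    have e0 : cross3 a v 0 = d * cross3 a' v 0 := by
      simp only [cross3, Matrix.cons_val_zero, Matrix.cons_val_one, Matrix.head_cons,
        Matrix.cons_val_two, Matrix.tail_cons]
      linear_combination (v 2) * (ha' 1) - (v 1) * (ha' 2)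
    have e1 : cross3 a v 1 = d * cross3 a' v 1 := by
      simp only [cross3, Matrix.cons_val_zero, Matrix.cons_val_one, Matrix.head_cons,
        Matrix.cons_val_two, Matrix.tail_cons]
      linear_combination (v 0) * (ha' 2) - (v 2) * (ha' 0)
    have e2 : cross3 a v 2 = d * cross3 a' v 2 := by
      simp only [cross3, Matrix.cons_val_zero, Matrix.cons_val_one, Matrix.head_cons,
        Matrix.cons_val_two, Matrix.tail_cons]
      linear_combination (v 1) * (ha' 0) - (v 0) * (ha' 1)
    funext i; fin_cases i
    · exact e0
    · exact e1
    · exact e2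
  have h3 : ∀ i, d ∣ cross3 (cross3 a' v) v i := by
    intro i
    have h := ha2 i
    rw [hcav, cross3_smul_left] at h
    rw [pow_two] at h
    exact (mul_dvd_mul_iff_left hd).mp h
  have hdN : d ∣ dot3 v v := (dvd_pow_self d two_ne_zero).trans hN
  have h4 : ∀ i, cross3 (cross3 a' v) v i = dot3 v a' * v i - dot3 v v * a' i := by
    have e0 : cross3 (cross3 a' v) v 0 = dot3 v a' * v 0 - dot3 v v * a' 0 := by
      simp only [cross3, dot3, Matrix.cons_val_zero, Matrix.cons_val_one, Matrix.head_cons,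
        Matrix.cons_val_two, Matrix.tail_cons]
      ring
    have e1 : cross3 (cross3 a' v) v 1 = dot3 v a' * v 1 - dot3 v v * a' 1 := by
      simp only [cross3, dot3, Matrix.cons_val_zero, Matrix.cons_val_one, Matrix.head_cons,
        Matrix.cons_val_two, Matrix.tail_cons]
      ring
    have e2 : cross3 (cross3 a' v) v 2 = dot3 v a' * v 2 - dot3 v v * a' 2 := by
      simp only [cross3, dot3, Matrix.cons_val_zero, Matrix.cons_val_one, Matrix.head_cons,
        Matrix.cons_val_two, Matrix.tail_cons]
      ring
    intro i; fin_cases i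
    · exact e0
    · exact e1
    · exact e2
  have h5 : ∀ i, d ∣ dot3 v a' * v i := by
    intro i
    have h := h3 i
    rw [h4 i] at h
    have := dvd_add h (hdN.mul_right (a' i))
    simpa using this
  have key : dot3 v a' = c 0 * (dot3 v a' * v 0) + c 1 * (dot3 v a' * v 1)
      + c 2 * (dot3 v a' * v 2) := by
    linear_combination (-(dot3 v a')) * hc
  rw [key]
  exact dvd_add (dvd_add ((h5 0).mul_left _) ((h5 1).mul_left _)) ((h5 2).mul_left _)

/-- For `a, b ∈ Γ(v,d)`, the dot product `a · b` is divisible by `d²`. -/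
theorem Gamma_dot_div (v : Fin 3 → ℤ) (hv : Primitive v)
    (d : ℤ) (hdvd : d^2 ∣ dot3 v v) (a b : Fin 3 → ℤ)
    (ha : a ∈ GammaSub v d) (hb : b ∈ GammaSub v d) :
    d^2 ∣ dot3 a b := by
  -- d ≠ 0
  have hd : d ≠ 0 := by
    rintro rfl
    have hvv : dot3 v v = 0 := by simpa using hdvd
    simp only [dot3] at hvv
    have h0 : v 0 = 0 := by nlinarith [sq_nonneg (v 0), sq_nonneg (v 1), sq_nonneg (v 2)]
    have h1 : v 1 = 0 := by nlinarith [sq_nonneg (v 0), sq_nonneg (v 1), sq_nonneg (v 2)]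
    have h2 : v 2 = 0 := by nlinarith [sq_nonneg (v 0), sq_nonneg (v 1), sq_nonneg (v 2)]
    simp [Primitive, h0, h1, h2] at hv
  -- Bezout coefficients
  obtain ⟨c, hc⟩ : ∃ c : Fin 3 → ℤ, c 0 * v 0 + c 1 * v 1 + c 2 * v 2 = 1 := by
    have h1 := Int.gcd_eq_gcd_ab (v 0) (v 1)
    have h2 := Int.gcd_eq_gcd_ab ((Int.gcd (v 0) (v 1) : ℤ)) (v 2)
    rw [hv] at h2
    refine ⟨![Int.gcdA (v 0) (v 1) * Int.gcdA ((Int.gcd (v 0) (v 1) : ℤ)) (v 2),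
      Int.gcdB (v 0) (v 1) * Int.gcdA ((Int.gcd (v 0) (v 1) : ℤ)) (v 2),
      Int.gcdB ((Int.gcd (v 0) (v 1) : ℤ)) (v 2)], ?_⟩
    simp only [Matrix.cons_val_zero, Matrix.cons_val_one, Matrix.head_cons,
      Matrix.cons_val_two, Matrix.tail_cons]
    push_cast at h2
    linear_combination -h2 - Int.gcdA ((Int.gcd (v 0) (v 1) : ℤ)) (v 2) * h1
  obtain ⟨t, a', ha', hpa⟩ := decomp v c hc d hd hdvd a ha
  obtain ⟨s, b', hb', hpb⟩ := decomp v c hc d hd hdvd b hb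
  obtain ⟨m, hm⟩ := hdvd
  obtain ⟨p, hp⟩ := hpa
  obtain ⟨q, hq⟩ := hpb
  refine ⟨t * s * m + t * q + s * p + dot3 a' b', ?_⟩
  simp only [dot3] at hm hp hq ⊢
  linear_combination (b 0) * ha' 0 + (b 1) * ha' 1 + (b 2) * ha' 2
    + (t * v 0 + d * a' 0) * hb' 0 + (t * v 1 + d * a' 1) * hb' 1
    + (t * v 2 + d * a' 2) * hb' 2 + t * s * hm + d * t * hq + d * s * hp
end
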